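/- Let X = U_X Σ_X V_Xᵀ and Y = U_Y Σ_Y V_Yᵀ be thin SVDs with U_X, U_Y ∈ ℝ^{m×·} having orthonormal columns. Let U_{Y,⊥} := U_Y - U_X U_Xᵀ U_Y with QR decomposition U_{Y,⊥} = QR where Qᵀ U_X = 0 and QᵀQ = I. Define G := [[Σ_X, U_Xᵀ U_Y Σ_Y], [0, R Σ_Y]] with SVD G = U_G Σ_G V_Gᵀ. Then setting U := [U_X Q] U_G, Σ := Σ_G, and V := blockdiag(V_X, V_Y) V_G yields a singular value decomposition of the concatenated matrix [X Y], i.e., [X Y] = UΣVᵀ with UᵀU = I and VᵀV = I. -/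

import Mathlib

open Matrix

/-- Correctness of the incremental SVD update (Algorithm 2.1, lines 1–5):
given thin SVDs of `X` and `Y`, the factorization built from the QR
decomposition of the orthogonal complement and the SVD of the small matrix `G`
is an SVD of the horizontal concatenation `[X Y]`. -/
theorem stmt8 (m n1 n2 r1 r2 s : ℕ)
    (X : Matrix (Fin m) (Fin n1) ℝ) (Y : Matrix (Fin m) (Fin n2) ℝ)
    (UX : Matrix (Fin m) (Fin r1) ℝ) (SX : Fin r1 → ℝ) (VX : Matrix (Fin n1) (Fin r1) ℝ)
    (UY : Matrix (Fin m) (Fin r2) ℝ) (SY : Fin r2 → ℝ) (VY : Matrix (Fin n2) (Fin r2) ℝ)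
    (Q : Matrix (Fin m) (Fin r2) ℝ) (R : Matrix (Fin r2) (Fin r2) ℝ)
    (UG : Matrix (Fin r1 ⊕ Fin r2) (Fin s) ℝ) (SG : Fin s → ℝ)
    (VG : Matrix (Fin r1 ⊕ Fin r2) (Fin s) ℝ)
    (hUX : UXᵀ * UX = 1) (hVX : VXᵀ * VX = 1) (hSX : ∀ i, 0 ≤ SX i)
    (hX : X = UX * Matrix.diagonal SX * VXᵀ)
    (hUY : UYᵀ * UY = 1) (hVY : VYᵀ * VY = 1) (hSY : ∀ i, 0 ≤ SY i)
    (hY : Y = UY * Matrix.diagonal SY * VYᵀ)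
    (hQR : UY - UX * (UXᵀ * UY) = Q * R)
    (hQX : Qᵀ * UX = 0) (hQ : Qᵀ * Q = 1)
    (hUXQ : (Matrix.fromCols UX Q)ᵀ * Matrix.fromCols UX Q = 1)
    (hUG : UGᵀ * UG = 1) (hVG : VGᵀ * VG = 1) (hSG : ∀ i, 0 ≤ SG i)
    (hG : Matrix.fromBlocks (Matrix.diagonal SX) (UXᵀ * UY * Matrix.diagonal SY)
            0 (R * Matrix.diagonal SY)
          = UG * Matrix.diagonal SG * VGᵀ) :
    Matrix.fromCols X Y
        = (Matrix.fromCols UX Q * UG) * Matrix.diagonal SG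
            * ((Matrix.fromBlocks VX 0 0 VY) * VG)ᵀ ∧
      (Matrix.fromCols UX Q * UG)ᵀ * (Matrix.fromCols UX Q * UG) = 1 ∧
      ((Matrix.fromBlocks VX 0 0 VY) * VG)ᵀ * ((Matrix.fromBlocks VX 0 0 VY) * VG) = 1 := by
  refine ⟨?_, ?_, ?_⟩
  · have key : (Matrix.fromCols UX Q * UG) * Matrix.diagonal SG
        * ((Matrix.fromBlocks VX 0 0 VY) * VG)ᵀ
        = Matrix.fromCols UX Q *
            (Matrix.fromBlocks (Matrix.diagonal SX) (UXᵀ * UY * Matrix.diagonal SY)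
              0 (R * Matrix.diagonal SY)) * (Matrix.fromBlocks VX 0 0 VY)ᵀ := by
      rw [hG]
      simp only [Matrix.transpose_mul, Matrix.mul_assoc]
    rw [key, Matrix.fromCols_mul_fromBlocks, Matrix.fromBlocks_transpose,
      Matrix.transpose_zero, Matrix.fromCols_mul_fromBlocks]
    have hQRd : Q * (R * Matrix.diagonal SY) = UY * Matrix.diagonal SY
        - UX * (UXᵀ * UY * Matrix.diagonal SY) := by
      rw [← Matrix.mul_assoc, ← hQR]
      simp [Matrix.sub_mul, Matrix.mul_assoc]
    rw [hQRd]
    ext i (j | j) <;>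
      simp [Matrix.fromCols, hX, hY, Matrix.mul_assoc, Matrix.sub_mul, Matrix.add_mul]
  · rw [Matrix.transpose_mul, Matrix.mul_assoc, ← Matrix.mul_assoc (Matrix.fromCols UX Q)ᵀ,
      hUXQ, Matrix.one_mul, hUG]
  · rw [Matrix.transpose_mul, Matrix.mul_assoc, ← Matrix.mul_assoc (Matrix.fromBlocks VX 0 0 VY)ᵀ,
      Matrix.fromBlocks_transpose, Matrix.fromBlocks_multiply]
    simp [hVX, hVY, Matrix.fromBlocks_one, hVG]
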